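/- arXiv:1509.04112 — 4 statements merged into one kernel-verified Lean document; each statement's English description precedes it below -/
import Mathlib

section
/- Let F be a field and X a nonempty set. An element a ∈ F[X] belongs to the set K·Mon = {α·w : α ∈ F, w a monomial in the variables X} if and only if every non-invertible divisor of a is divisible by some variable x ∈ X. (For finite X this characterizes scalar multiples of monomials.) -/
open MvPolynomial

section Aux

variable {F σ : Type*} [Field F]

private lemma coeff_max_mul [LinearOrder σ] (b c : MvPolynomial σ F) {u v : σ →₀ ℕ}
    (hu : ∀ u' ∈ b.support, toLex u' ≤ toLex u)
    (hv : ∀ v' ∈ c.support, toLex v' ≤ toLex v) :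
    MvPolynomial.coeff (u + v) (b * c) = MvPolynomial.coeff u b * MvPolynomial.coeff v c := by
  classical
  rw [MvPolynomial.coeff_mul]
  apply Finset.sum_eq_single (u, v)
  · rintro ⟨x, y⟩ hxy hne
    rw [Finset.HasAntidiagonal.mem_antidiagonal] at hxy
    by_cases hx : x ∈ b.support
    · by_cases hy : y ∈ c.support
      · exfalso
        have h1 : toLex x ≤ toLex u := hu x hx
        have h2 : toLex y ≤ toLex v := hv y hy
        have hsum : toLex x + toLex y = toLex u + toLex v := by
          rw [← toLex_add, ← toLex_add, hxy]
        rcases h1.lt_or_eq with h1' | h1'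
        · exact (add_lt_add_of_lt_of_le h1' h2).ne hsum
        · rcases h2.lt_or_eq with h2' | h2'
          · exact (by rw [h1']; exact (add_lt_add_of_le_of_lt le_rfl h2') :
              toLex x + toLex y < toLex u + toLex v).ne hsum
          · exact hne (Prod.ext (toLex.injective h1') (toLex.injective h2'))
      · simp [MvPolynomial.notMem_support_iff.mp hy]
    · simp [MvPolynomial.notMem_support_iff.mp hx]
  · intro h
    simp [Finset.HasAntidiagonal.mem_antidiagonal] at h

private lemma coeff_min_mul [LinearOrder σ] (b c : MvPolynomial σ F) {u v : σ →₀ ℕ}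
    (hu : ∀ u' ∈ b.support, toLex u ≤ toLex u')
    (hv : ∀ v' ∈ c.support, toLex v ≤ toLex v') :
    MvPolynomial.coeff (u + v) (b * c) = MvPolynomial.coeff u b * MvPolynomial.coeff v c := by
  classical
  rw [MvPolynomial.coeff_mul]
  apply Finset.sum_eq_single (u, v)
  · rintro ⟨x, y⟩ hxy hne
    rw [Finset.HasAntidiagonal.mem_antidiagonal] at hxy
    by_cases hx : x ∈ b.support
    · by_cases hy : y ∈ c.support
      · exfalso
        have h1 : toLex u ≤ toLex x := hu x hx
        have h2 : toLex v ≤ toLex y := hv y hy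
        have hsum : toLex x + toLex y = toLex u + toLex v := by
          rw [← toLex_add, ← toLex_add, hxy]
        rcases h1.lt_or_eq with h1' | h1'
        · exact (add_lt_add_of_lt_of_le h1' h2).ne hsum.symm
        · rcases h2.lt_or_eq with h2' | h2'
          · exact (by rw [← h1']; exact (add_lt_add_of_le_of_lt le_rfl h2') :
              toLex u + toLex v < toLex x + toLex y).ne hsum.symm
          · exact hne (Prod.ext (toLex.injective h1'.symm) (toLex.injective h2'.symm))
      · simp [MvPolynomial.notMem_support_iff.mp hy]
    · simp [MvPolynomial.notMem_support_iff.mp hx]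
  · intro h
    simp [Finset.HasAntidiagonal.mem_antidiagonal] at h

/-- A divisor of a nonzero scalar multiple of a monomial is a nonzero scalar multiple of a
monomial. -/
private lemma dvd_monomial {b : MvPolynomial σ F} {d : σ →₀ ℕ} {α : F}
    (hα : α ≠ 0) (hdvd : b ∣ MvPolynomial.monomial d α) :
    ∃ (β : F) (e : σ →₀ ℕ), β ≠ 0 ∧ b = MvPolynomial.monomial e β := by
  classical
  letI : LinearOrder σ := linearOrderOfSTO WellOrderingRel
  obtain ⟨c, hbc⟩ := hdvd
  have hne : (MvPolynomial.monomial d α : MvPolynomial σ F) ≠ 0 := by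
    simp [MvPolynomial.monomial_eq_zero, hα]
  rw [hbc] at hne
  have hb : b ≠ 0 := left_ne_zero_of_mul hne
  have hc : c ≠ 0 := right_ne_zero_of_mul hne
  obtain ⟨uM, huM, huMmax⟩ :=
    b.support.exists_max_image (fun m => toLex m) (MvPolynomial.support_nonempty.mpr hb)
  obtain ⟨um, hum, hummin⟩ :=
    b.support.exists_min_image (fun m => toLex m) (MvPolynomial.support_nonempty.mpr hb)
  obtain ⟨vM, hvM, hvMmax⟩ :=
    c.support.exists_max_image (fun m => toLex m) (MvPolynomial.support_nonempty.mpr hc)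
  obtain ⟨vm, hvm, hvmmin⟩ :=
    c.support.exists_min_image (fun m => toLex m) (MvPolynomial.support_nonempty.mpr hc)
  have hsupp : (b * c).support = {d} := by
    rw [← hbc, MvPolynomial.support_monomial, if_neg hα]
  have hmax : uM + vM = d := by
    have h1 : MvPolynomial.coeff (uM + vM) (b * c) ≠ 0 := by
      rw [coeff_max_mul b c huMmax hvMmax]
      exact mul_ne_zero (MvPolynomial.mem_support_iff.mp huM)
        (MvPolynomial.mem_support_iff.mp hvM)
    have := MvPolynomial.mem_support_iff.mpr h1
    rw [hsupp, Finset.mem_singleton] at this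
    exact this
  have hmin : um + vm = d := by
    have h1 : MvPolynomial.coeff (um + vm) (b * c) ≠ 0 := by
      rw [coeff_min_mul b c hummin hvmmin]
      exact mul_ne_zero (MvPolynomial.mem_support_iff.mp hum)
        (MvPolynomial.mem_support_iff.mp hvm)
    have := MvPolynomial.mem_support_iff.mpr h1
    rw [hsupp, Finset.mem_singleton] at this
    exact this
  have hkey : toLex um = toLex uM := by
    refine le_antisymm (hummin uM huM) ?_
    by_contra hlt
    push_neg at hlt
    have hsum : toLex um + toLex vm = toLex uM + toLex vM := by
      rw [← toLex_add, ← toLex_add, hmin, hmax]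
    exact (add_lt_add_of_lt_of_le hlt (hvmmin vM hvM)).ne hsum
  have hall : ∀ m ∈ b.support, m = uM := by
    intro m hm
    exact toLex.injective (le_antisymm (huMmax m hm) (hkey ▸ hummin m hm))
  refine ⟨MvPolynomial.coeff uM b, uM, MvPolynomial.mem_support_iff.mp huM, ?_⟩
  ext m
  rw [MvPolynomial.coeff_monomial]
  split_ifs with h
  · rw [h]
  · by_contra hne'
    exact h ((hall m (MvPolynomial.mem_support_iff.mpr hne')).symm)

private lemma eq_C_of_totalDegree_eq_zero {a : MvPolynomial σ F}
    (h : a.totalDegree = 0) : a = MvPolynomial.C (MvPolynomial.coeff 0 a) := by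
  classical
  ext m
  rcases eq_or_ne m 0 with rfl | hm
  · simp
  · rw [MvPolynomial.coeff_C, if_neg (by exact fun he => hm he.symm)]
    by_contra hne
    have hmem := MvPolynomial.mem_support_iff.mpr hne
    have := (MvPolynomial.totalDegree_eq_zero_iff σ a).mp h m hmem
    exact hm (Finsupp.ext fun x => this x)

private lemma key_induction : ∀ (n : ℕ) (a : MvPolynomial σ F), a.totalDegree ≤ n → a ≠ 0 →
    (∀ b : MvPolynomial σ F, b ∣ a → ¬ IsUnit b → ∃ x : σ, MvPolynomial.X x ∣ b) →
    ∃ (α : F) (d : σ →₀ ℕ), α ≠ 0 ∧ a = MvPolynomial.monomial d α := by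
  intro n
  induction n with
  | zero =>
    intro a hdeg ha _
    refine ⟨MvPolynomial.coeff 0 a, 0, ?_, ?_⟩
    · intro h0
      exact ha (by
        rw [eq_C_of_totalDegree_eq_zero (Nat.le_zero.mp hdeg), h0, map_zero])
    · rw [MvPolynomial.monomial_zero']
      exact eq_C_of_totalDegree_eq_zero (Nat.le_zero.mp hdeg)
  | succ n ih =>
    intro a hdeg ha H
    by_cases hu : IsUnit a
    · have hdvd : a ∣ MvPolynomial.monomial (0 : σ →₀ ℕ) (1 : F) := by
        rw [MvPolynomial.monomial_zero', map_one]
        exact hu.dvd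
      obtain ⟨β, e, hβ, hb⟩ := dvd_monomial one_ne_zero hdvd
      exact ⟨β, e, hβ, hb⟩
    · obtain ⟨x, hxa⟩ := H a dvd_rfl hu
      obtain ⟨c, rfl⟩ := hxa
      have hc : c ≠ 0 := right_ne_zero_of_mul ha
      have hdegc : c.totalDegree ≤ n := by
        obtain ⟨m, hm, hms⟩ := Finset.exists_mem_eq_sup c.support
          (MvPolynomial.support_nonempty.mpr hc) (fun s => s.sum fun _ e => e)
        have hmem : (Finsupp.single x 1 + m) ∈ (MvPolynomial.X x * c).support := by
          rw [MvPolynomial.mem_support_iff, MvPolynomial.coeff_X_mul]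
          exact MvPolynomial.mem_support_iff.mp hm
        have hle := MvPolynomial.le_totalDegree hmem
        have hsum : ((Finsupp.single x 1 + m).sum fun _ e => e) =
            1 + (m.sum fun _ e => e) := by
          rw [Finsupp.sum_add_index' (fun _ => rfl) (fun _ _ _ => rfl),
            Finsupp.sum_single_index rfl]
        rw [hsum] at hle
        have : 1 + c.totalDegree ≤ n + 1 := by
          refine le_trans ?_ hdeg
          rw [MvPolynomial.totalDegree, hms]
          exact hle
        omega
      obtain ⟨α, d, hα, rfl⟩ := ih c hdegc hc
        (fun b hb hub => H b (hb.trans (dvd_mul_left c (MvPolynomial.X x))) hub)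
      exact ⟨α, Finsupp.single x 1 + d, hα, by
        rw [MvPolynomial.X, MvPolynomial.monomial_mul, one_mul]⟩

end Aux

/-- In `F[X]` (`F` a field, `X` nonempty), an element `a` is a nonzero scalar multiple of a
monomial in the variables `X` if and only if every non-invertible divisor of `a` is
divisible by some variable `x ∈ X`. -/
theorem scalar_monomial_iff_divisors {F σ : Type*} [Field F] [Nonempty σ]
    (a : MvPolynomial σ F) :
    (∃ (α : F) (d : σ →₀ ℕ), α ≠ 0 ∧ a = MvPolynomial.monomial d α) ↔
      ∀ b : MvPolynomial σ F, b ∣ a → ¬ IsUnit b → ∃ x : σ, MvPolynomial.X x ∣ b := by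
  constructor
  · rintro ⟨α, d, hα, rfl⟩ b hdvd hunit
    obtain ⟨β, e, hβ, rfl⟩ := dvd_monomial hα hdvd
    rcases eq_or_ne e 0 with rfl | he
    · exact absurd (by
        rw [MvPolynomial.monomial_zero']
        exact hβ.isUnit.map MvPolynomial.C) hunit
    · obtain ⟨x, hx⟩ := Finsupp.ne_iff.mp he
      exact ⟨x, MvPolynomial.X_dvd_monomial.mpr (Or.inr (by simpa using hx))⟩
  · intro H
    have ha : a ≠ 0 := by
      rintro rfl
      obtain ⟨x₀⟩ := ‹Nonempty σ›
      have hnu : ¬ IsUnit (1 + MvPolynomial.X x₀ : MvPolynomial σ F) := by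
        intro hu
        have := hu.map (MvPolynomial.eval (fun _ => (-1 : F)))
        simp at this
      obtain ⟨x, q, hq⟩ := H (1 + MvPolynomial.X x₀) (dvd_zero _) hnu
      have := congrArg MvPolynomial.constantCoeff hq
      simp at this
    exact key_induction a.totalDegree a le_rfl ha H
end

section
/- Let K be a field and let A be the maximal ring of scalars of the free unital associative algebra A_K(X) with |X| ≥ 2. Concretely: if φ : A_K(X) → A_K(X) is an additive endomorphism satisfying φ(uv) = φ(u)v = uφ(v) for all u, v ∈ A_K(X), then there exists α ∈ K such that φ(a) = αa for all a ∈ A_K(X). -/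
open MonoidAlgebra

/-- A central element of the monoid algebra over a free monoid on at least two
generators is supported on the identity. -/
lemma central_monoidAlgebra_support {K X : Type*} [Field K]
    (hX : ∃ x y : X, x ≠ y) (d : MonoidAlgebra K (FreeMonoid X))
    (hd : ∀ u : MonoidAlgebra K (FreeMonoid X), d * u = u * d) :
    ∀ w : FreeMonoid X, w ≠ 1 → d.coeff w = 0 := by
  intro w hw
  classical
  obtain ⟨a, l, rfl⟩ : ∃ a l, w = FreeMonoid.ofList (a :: l) := by
    rcases hl : FreeMonoid.toList w with _ | ⟨a, l⟩
    · exact absurd (by rw [← FreeMonoid.ofList_toList w, hl]; rfl) hw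
    · exact ⟨a, l, by rw [← hl, FreeMonoid.ofList_toList]⟩
  obtain ⟨x, y, hxy⟩ := hX
  obtain ⟨x, hxa⟩ : ∃ x : X, x ≠ a := by
    by_cases h : x = a
    · exact ⟨y, by simpa [h] using hxy.symm⟩
    · exact ⟨x, h⟩
  set w : FreeMonoid X := FreeMonoid.ofList (a :: l)
  set s : MonoidAlgebra K (FreeMonoid X) := single (FreeMonoid.of x) 1 with hs
  have key : (d * s).coeff (w * FreeMonoid.of x) = (s * d).coeff (w * FreeMonoid.of x) := by rw [hd]
  rw [hs] at key
  rw [MonoidAlgebra.mul_single_apply_aux (x := d) _ (fun u _ => mul_left_inj _),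
    MonoidAlgebra.single_mul_apply_of_not_exists_mul] at key
  · simpa using key
  · rintro ⟨u, hu⟩
    have : FreeMonoid.toList (w * FreeMonoid.of x)
        = FreeMonoid.toList (FreeMonoid.of x * u) := by rw [hu]
    simp only [FreeMonoid.toList_mul, FreeMonoid.toList_of, FreeMonoid.toList_ofList, w] at this
    exact hxa (List.head_eq_of_cons_eq this.symm)

/-- Maximal ring of scalars of the free associative algebra: if `|X| ≥ 2` and
`φ : A_K(X) → A_K(X)` is an additive endomorphism with `φ(uv) = φ(u)v = uφ(v)`
for all `u, v`, then `φ` is multiplication by some scalar `α ∈ K`. -/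
theorem freeAlgebra_maximal_ring_of_scalars {K X : Type*} [Field K]
    (hX : ∃ x y : X, x ≠ y)
    (φ : FreeAlgebra K X →+ FreeAlgebra K X)
    (h1 : ∀ u v : FreeAlgebra K X, φ (u * v) = φ u * v)
    (h2 : ∀ u v : FreeAlgebra K X, φ (u * v) = u * φ v) :
    ∃ α : K, ∀ a : FreeAlgebra K X, φ a = α • a := by
  set c : FreeAlgebra K X := φ 1 with hc_def
  have hc : ∀ u : FreeAlgebra K X, c * u = u * c := fun u => by
    rw [hc_def, ← h1 1 u, one_mul, ← mul_one u, h2, mul_one]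
  set e := FreeAlgebra.equivMonoidAlgebraFreeMonoid (R := K) (X := X)
  set d := e c with hd_def
  have hd : ∀ u : MonoidAlgebra K (FreeMonoid X), d * u = u * d := fun u => by
    have := hc (e.symm u)
    have h2 := congrArg e this
    simpa [hd_def] using h2
  have hsupp := central_monoidAlgebra_support hX d hd
  classical
  have hdsingle : d = single (1 : FreeMonoid X) (d.coeff 1) := by
    ext w
    by_cases hw : w = 1
    · simp [hw]
    · rw [hsupp w hw, MonoidAlgebra.coeff_single_apply, if_neg (fun h => hw h.symm)]
  refine ⟨d.coeff 1, fun a => ?_⟩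
  have hc_eq : c = algebraMap K (FreeAlgebra K X) (d.coeff 1) := by
    have : e c = e (algebraMap K (FreeAlgebra K X) (d.coeff 1)) := by
      rw [AlgEquiv.commutes, ← hd_def, hdsingle, MonoidAlgebra.coe_algebraMap]
      simp
    exact e.injective this
  calc φ a = φ (1 * a) := by rw [one_mul]
    _ = c * a := h1 1 a
    _ = (d.coeff 1) • a := by rw [hc_eq, Algebra.algebraMap_eq_smul_one, smul_mul_assoc, one_mul]
end

section
/- Let K be a field and X a finite set with |X| = r. In the non-unital free associative algebra A = A⁰_K(X), the n-th power ideal Aⁿ has width at most rⁿ: every element of Aⁿ is a sum of at most rⁿ products of n elements of A. -/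
/-- The set of products of `n` elements (`n ≥ 1`) in a non-unital multiplicative
structure: left-associated products `a₁a₂⋯aₙ`. -/
def nFoldProducts (A : Type*) [Mul A] (n : ℕ) : Set A :=
  {y | ∃ (a : A) (l : List A), l.length + 1 = n ∧ y = l.foldl (· * ·) a}

section Aux

variable {K X : Type*} [Field K]

local notation "A" => MonoidAlgebra K (FreeSemigroup X)

lemma foldl_mul_assoc {M : Type*} [Semigroup M] (l : List M) (x b : M) :
    x * l.foldl (· * ·) b = l.foldl (· * ·) (x * b) := by
  induction l generalizing b with
  | nil => rfl
  | cons h t ih => simp only [List.foldl_cons, ih, mul_assoc]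

/-- If all words in the support of `z` admit `u` (of length `n`) as a prefix, then `z`
is a product of `n` elements. -/
lemma mem_nFold (n : ℕ) (hn : 1 ≤ n) (u : List X) (hu : u.length = n)
    (z : A) (hz : ∀ w ∈ z.coeff.support, u <+: (w.1 :: w.2)) :
    z ∈ nFoldProducts A n := by
  induction n generalizing u z with
  | zero => omega
  | succ m ih =>
    rcases Nat.eq_or_lt_of_le hn with h1 | h2
    · exact ⟨z, [], by simpa using h1, rfl⟩
    have hm : 1 ≤ m := by omega
    obtain ⟨c, u', rfl⟩ : ∃ c u', u = c :: u' := by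
      cases u with
      | nil => simp at hu
      | cons c u' => exact ⟨c, u', rfl⟩
    have hu' : u'.length = m := by simpa using hu
    -- the left quotient by the letter c
    set tl : FreeSemigroup X → FreeSemigroup X := fun w =>
      match w.2 with
      | [] => w
      | a :: t => ⟨a, t⟩ with htl
    classical
    set z' : A := z.coeff.support.sum (fun w => MonoidAlgebra.single (tl w) (z.coeff w)) with hz'
    have key : ∀ w ∈ z.coeff.support, w.1 = c ∧ ∃ a t, w.2 = a :: t ∧ u' <+: a :: t := by
      intro w hw
      obtain ⟨s, hs⟩ := hz w hw
      simp only [List.cons_append] at hs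
      injection hs with hc htail
      cases hu'' : u' with
      | nil => rw [hu''] at hu'; simp at hu'; omega
      | cons a t =>
        refine ⟨hc.symm, a, t ++ s, ?_, ?_⟩
        · rw [← htail, hu'']; simp
        · exact ⟨s, by simp [hu'']⟩
    have hmul : MonoidAlgebra.single (FreeSemigroup.of c) (1 : K) * z' = z := by
      rw [hz', Finset.mul_sum]
      have heq : ∀ w ∈ z.coeff.support,
          MonoidAlgebra.single (FreeSemigroup.of c) (1 : K)
              * MonoidAlgebra.single (tl w) (z.coeff w)
            = MonoidAlgebra.single w (z.coeff w) := by
        intro w hw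
        obtain ⟨hc, a, t, ht, -⟩ := key w hw
        have h1 : tl w = ⟨a, t⟩ := by simp only [htl, ht]
        have h2 : FreeSemigroup.of c * tl w = w := by
          rw [h1]
          refine FreeSemigroup.ext ?_ ?_ <;> simp [FreeSemigroup.of, hc, ht]
        rw [MonoidAlgebra.single_mul_single, h2, one_mul]
      rw [Finset.sum_congr rfl heq]
      exact MonoidAlgebra.sum_coeff_single z
    have hzsupp : ∀ w' ∈ z'.coeff.support, u' <+: (w'.1 :: w'.2) := by
      intro w' hw'
      by_contra hcon
      apply Finsupp.mem_support_iff.mp hw'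
      rw [hz', MonoidAlgebra.coeff_sum, Finset.sum_apply']
      apply Finset.sum_eq_zero
      intro w hw
      rw [MonoidAlgebra.single_apply, if_neg]
      rintro rfl
      obtain ⟨-, a, t, ht, hpre⟩ := key w hw
      apply hcon
      have h1 : tl w = ⟨a, t⟩ := by simp only [htl, ht]
      rw [h1]
      exact hpre
    obtain ⟨a', l', hl', hfold⟩ := ih hm u' hu' z' hzsupp
    refine ⟨MonoidAlgebra.single (FreeSemigroup.of c) (1 : K), a' :: l', by simpa using hl', ?_⟩
    rw [← hmul, hfold]
    simp only [List.foldl_cons]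
    exact foldl_mul_assoc l' _ a'

/-- Words in the support of an n-fold product have length at least n. -/
lemma length_ge_of_mem_support (m : ℕ) (a : A) (l : List A)
    (ha : ∀ w ∈ a.coeff.support, m ≤ w.length)
    : ∀ w ∈ (l.foldl (· * ·) a).coeff.support, m + l.length ≤ w.length := by
  classical
  induction l generalizing a m with
  | nil => simpa using ha
  | cons b t ih =>
    intro w hw
    simp only [List.foldl_cons] at hw
    have hab : ∀ w ∈ (a * b).coeff.support, m + 1 ≤ w.length := by
      intro w hw
      have := MonoidAlgebra.support_coeff_mul_subset a b hw
      rw [Finset.mem_mul] at this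
      obtain ⟨x, hx, y, hy, rfl⟩ := this
      have := ha x hx
      have hy1 : 1 ≤ y.length := Nat.succ_le_succ (Nat.zero_le _)
      rw [FreeSemigroup.length_mul]
      omega
    have := ih (m + 1) (a * b) hab w hw
    simp only [List.length_cons]
    omega

end Aux

/-- In the free non-unital associative algebra `A = A⁰_K(X)` on a finite set `X` with
`|X| = r` (realized as the semigroup algebra of the free semigroup on `X`), the `n`-th
power ideal `Aⁿ` has width at most `rⁿ`: every element of `Aⁿ` is a sum of at most `rⁿ`
products of `n` elements of `A`. -/
theorem freeNonUnitalAlgebra_power_width_le (K X : Type*) [Field K] [Fintype X]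
    (n : ℕ) (hn : 1 ≤ n) :
    ∀ x ∈ AddSubgroup.closure
        (nFoldProducts (MonoidAlgebra K (FreeSemigroup X)) n),
      ∃ l : List (MonoidAlgebra K (FreeSemigroup X)),
        l.length ≤ (Fintype.card X) ^ n ∧
        (∀ y ∈ l, y ∈ nFoldProducts (MonoidAlgebra K (FreeSemigroup X)) n) ∧
        x = l.sum := by
  classical
  intro x hx
  -- Step 1: every word in the support of x has length ≥ n
  have hsupp : ∀ w ∈ x.coeff.support, n ≤ w.length := by
    induction hx using AddSubgroup.closure_induction with
    | mem y hy =>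
      obtain ⟨a, l, hl, rfl⟩ := hy
      intro w hw
      have := length_ge_of_mem_support 1 a l
        (fun w _ => Nat.succ_le_succ (Nat.zero_le _)) w hw
      omega
    | zero => simp
    | add y z _ _ ihy ihz =>
      intro w hw
      rcases Finset.mem_union.mp (Finsupp.support_add hw) with h | h
      · exact ihy w h
      · exact ihz w h
    | neg y _ ihy =>
      intro w hw
      rw [MonoidAlgebra.coeff_neg, Finsupp.support_neg] at hw
      exact ihy w hw
  -- Step 2: group by the length-n prefix
  set pref : FreeSemigroup X → (Fin n → X) := fun w i => (w.1 :: w.2).getD i w.1 with hpref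
  set comp : (Fin n → X) → MonoidAlgebra K (FreeSemigroup X) := fun u =>
    (x.coeff.support.filter (fun w => pref w = u)).sum
      (fun w => MonoidAlgebra.single w (x.coeff w)) with hcomp
  refine ⟨(Finset.univ : Finset (Fin n → X)).toList.map comp, ?_, ?_, ?_⟩
  · simp [Fintype.card_fun]
  · intro y hy
    obtain ⟨u, -, rfl⟩ := List.mem_map.mp hy
    apply mem_nFold n hn (List.ofFn u) (by simp)
    intro w hw
    have hw' : w ∈ x.coeff.support.filter (fun w => pref w = u) := by
      by_contra hc
      apply Finsupp.mem_support_iff.mp hw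
      rw [hcomp, MonoidAlgebra.coeff_sum, Finset.sum_apply']
      apply Finset.sum_eq_zero
      intro v hv
      rw [MonoidAlgebra.single_apply, if_neg]
      rintro rfl; exact hc hv
    obtain ⟨hwx, hpu⟩ := Finset.mem_filter.mp hw'
    have hlen : n ≤ (w.1 :: w.2).length := by
      have := hsupp w hwx
      simpa [FreeSemigroup.length] using this
    have hofn : List.ofFn u = (w.1 :: w.2).take n := by
      apply List.ext_getElem
      · have h := hlen; simp at h ⊢; omega
      · intro i h1 h2
        have hi : i < n := by simpa using h1
        have hiL : i < (w.1 :: w.2).length := hi.trans_le hlen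
        have e1 : u ⟨i, hi⟩ = pref w ⟨i, hi⟩ := by rw [hpu]
        have e2 : pref w ⟨i, hi⟩ = (w.1 :: w.2)[i] := by
          simp only [hpref]
          exact List.getD_eq_getElem _ _ hiL
        rw [List.getElem_ofFn, List.getElem_take]
        exact e1.trans e2
    rw [hofn]
    exact List.take_prefix n _
  · rw [Finset.sum_map_toList]
    rw [hcomp]
    rw [Finset.sum_fiberwise x.coeff.support pref (fun w => MonoidAlgebra.single w (x.coeff w))]
    exact (MonoidAlgebra.sum_coeff_single x).symm
end

section
/- Let K be a field, X a set with |X| ≥ 2, containing distinct elements x₁, x₂. For each m ∈ ℕ define the monomial a_m = x₁x₂ x₁x₂² x₁x₂³ ⋯ x₁x₂ᵐ in the free monoid on X. Then a_m is not a proper power, and a_m is not of the form w₁w₂w₁ for nonempty words w₁, w₂. -/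
/-- The word `a_m = x₁x₂ x₁x₂² x₁x₂³ ⋯ x₁x₂ᵐ` in the free monoid. -/
def aWord {X : Type*} (x₁ x₂ : X) (m : ℕ) : FreeMonoid X :=
  ((List.range m).map fun j => FreeMonoid.of x₁ * (FreeMonoid.of x₂) ^ (j + 1)).prod

section Aux

open List

variable {X : Type*} (x₁ x₂ : X)

private lemma ofPow_toList (x : X) (n : ℕ) :
    FreeMonoid.toList ((FreeMonoid.of x) ^ n) = List.replicate n x := by
  induction n with
  | zero => rfl
  | succ n ih =>
    rw [pow_succ, FreeMonoid.toList_mul, ih, FreeMonoid.toList_of, List.replicate_succ']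

private lemma pow_toList_length (w : FreeMonoid X) (n : ℕ) :
    (FreeMonoid.toList (w ^ n)).length = n * (FreeMonoid.toList w).length := by
  induction n with
  | zero => simp
  | succ n ih => rw [pow_succ, FreeMonoid.toList_mul, List.length_append, ih]; ring

private lemma aList_zero : FreeMonoid.toList (aWord x₁ x₂ 0) = [] := rfl

private lemma aList_succ (m : ℕ) :
    FreeMonoid.toList (aWord x₁ x₂ (m + 1)) =
      FreeMonoid.toList (aWord x₁ x₂ m) ++ (x₁ :: List.replicate (m + 1) x₂) := by
  have h : aWord x₁ x₂ (m + 1)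
      = aWord x₁ x₂ m * (FreeMonoid.of x₁ * (FreeMonoid.of x₂) ^ (m + 1)) := by
    simp [aWord, List.range_succ]
  rw [h, FreeMonoid.toList_mul, FreeMonoid.toList_mul, FreeMonoid.toList_of, ofPow_toList]
  rfl

private lemma aList_head (m : ℕ) :
    ∃ r, FreeMonoid.toList (aWord x₁ x₂ (m + 1)) = x₁ :: r := by
  induction m with
  | zero => exact ⟨List.replicate 1 x₂, by rw [aList_succ, aList_zero]; rfl⟩
  | succ n ih =>
    obtain ⟨r, hr⟩ := ih
    exact ⟨r ++ (x₁ :: List.replicate (n + 2) x₂), by rw [aList_succ, hr]; rfl⟩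

private lemma aList_len (m : ℕ) :
    2 * m ≤ (FreeMonoid.toList (aWord x₁ x₂ m)).length := by
  induction m with
  | zero => simp
  | succ n ih =>
    rw [aList_succ, List.length_append]
    simp only [List.length_cons, List.length_replicate]
    omega

variable {x₁ x₂}

/-- Key lemma: the factor `x₂^m` occurs in `a_m` only at the very end. -/
private lemma key (hx : x₁ ≠ x₂) :
    ∀ (m : ℕ) (u v : List X),
      FreeMonoid.toList (aWord x₁ x₂ m) = u ++ (List.replicate m x₂ ++ v) → v = [] := by
  intro m
  induction m with
  | zero =>
    intro u v h
    rw [aList_zero] at h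
    simp only [List.replicate_zero, List.nil_append] at h
    exact (List.append_eq_nil_iff.mp h.symm).2
  | succ n ih =>
    intro u v h
    by_cases hv : v = []
    · exact hv
    exfalso
    have hb := aList_succ x₁ x₂ n
    have hS1 : List.replicate (n + 1) x₂ ++ v <:+ FreeMonoid.toList (aWord x₁ x₂ (n + 1)) :=
      ⟨u, h.symm⟩
    have hS2 : (x₁ :: List.replicate (n + 1) x₂) <:+ FreeMonoid.toList (aWord x₁ x₂ (n + 1)) :=
      ⟨_, hb.symm⟩
    have hvS : v <:+ FreeMonoid.toList (aWord x₁ x₂ (n + 1)) :=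
      (List.suffix_append _ v).trans hS1
    have hvlen : 1 ≤ v.length := List.length_pos_iff.mpr hv
    rcases List.suffix_or_suffix_of_suffix hS2 hS1 with he | he
    · -- he : x₁ :: rep (n+1) <:+ rep (n+1) ++ v
      by_cases hlen : n + 2 ≤ v.length
      · -- then x₁ :: rep (n+1) is a suffix of v; cancel it and apply IH
        have hSv : (x₁ :: List.replicate (n + 1) x₂) <:+ v := by
          rcases List.suffix_or_suffix_of_suffix hS2 hvS with hf | hf
          · exact hf
          · have hle := hf.length_le
            simp only [List.length_cons, List.length_replicate] at hle
            have : v = x₁ :: List.replicate (n + 1) x₂ :=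
              hf.eq_of_length (by simp; omega)
            rw [this]
        obtain ⟨v₀, hv₀⟩ := hSv
        have hcan : (u ++ (List.replicate (n + 1) x₂ ++ v₀)) ++ (x₁ :: List.replicate (n + 1) x₂)
            = FreeMonoid.toList (aWord x₁ x₂ n) ++ (x₁ :: List.replicate (n + 1) x₂) := by
          rw [← hb, h, ← hv₀]
          simp [List.append_assoc]
        have hcan2 := List.append_cancel_right hcan
        have h2 : FreeMonoid.toList (aWord x₁ x₂ n)
            = u ++ (List.replicate n x₂ ++ (x₂ :: v₀)) := by
          rw [← hcan2, List.replicate_succ']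
          simp
        exact List.cons_ne_nil _ _ (ih u (x₂ :: v₀) h2)
      · -- then v consists only of x₂'s, so x₁ occurs in a replicate: contradiction
        have hvall : ∀ b ∈ v, b = x₂ := by
          have hvS2 : v <:+ (x₁ :: List.replicate (n + 1) x₂) := by
            rcases List.suffix_or_suffix_of_suffix hvS hS2 with hf | hf
            · exact hf
            · exfalso
              have hle := hf.length_le
              simp only [List.length_cons, List.length_replicate] at hle
              omega
          rcases List.suffix_or_suffix_of_suffix hvS2 (List.suffix_cons x₁ _) with hf | hf
          · exact fun b hb => List.eq_of_mem_replicate (hf.sublist.subset hb)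
          · have hle := hf.length_le
            have heq : List.replicate (n + 1) x₂ = v :=
              hf.eq_of_length (by simp at hle ⊢; omega)
            intro b hb
            rw [← heq] at hb
            exact List.eq_of_mem_replicate hb
        have hx1 : x₁ ∈ List.replicate (n + 1) x₂ ++ v :=
          he.sublist.subset (List.mem_cons_self)
        rcases List.mem_append.mp hx1 with h1 | h1
        · exact hx (List.eq_of_mem_replicate h1)
        · exact hx (hvall _ h1)
    · -- he : rep (n+1) ++ v <:+ x₁ :: rep (n+1); forces equal lengths, heads differ
      have hle := he.length_le
      simp only [List.length_append, List.length_cons, List.length_replicate] at hle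
      have heq : List.replicate (n + 1) x₂ ++ v = x₁ :: List.replicate (n + 1) x₂ :=
        he.eq_of_length (by simp; omega)
      rw [List.replicate_succ, List.cons_append] at heq
      injection heq with h1 _
      exact hx h1.symm

end Aux

/-- For distinct `x₁, x₂`, the word `a_m = x₁x₂x₁x₂²⋯x₁x₂ᵐ` is not a proper power
(`wᵏ` with `w` nonempty and `k ≥ 2`) and is not of the form `w₁w₂w₁` with `w₁, w₂`
nonempty. -/
theorem aWord_not_properPower_not_sandwich {X : Type*} (x₁ x₂ : X) (hx : x₁ ≠ x₂)
    (m : ℕ) :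
    (¬ ∃ (w : FreeMonoid X) (k : ℕ), w ≠ 1 ∧ 2 ≤ k ∧ aWord x₁ x₂ m = w ^ k) ∧
    (¬ ∃ w₁ w₂ : FreeMonoid X, w₁ ≠ 1 ∧ w₂ ≠ 1 ∧ aWord x₁ x₂ m = w₁ * w₂ * w₁) := by
  constructor
  · rintro ⟨w, k, hw1, hk, hpow⟩
    have hW : FreeMonoid.toList w ≠ [] := fun hnil => hw1 hnil
    obtain ⟨j, rfl⟩ : ∃ j, k = j + 1 := ⟨k - 1, by omega⟩
    have hj : 1 ≤ j := by omega
    have h1 : FreeMonoid.toList (aWord x₁ x₂ m)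
        = FreeMonoid.toList w ++ FreeMonoid.toList (w ^ j) := by
      rw [hpow, pow_succ', FreeMonoid.toList_mul]
    have h2 : FreeMonoid.toList (aWord x₁ x₂ m)
        = FreeMonoid.toList (w ^ j) ++ FreeMonoid.toList w := by
      rw [hpow, pow_succ, FreeMonoid.toList_mul]
    match m with
    | 0 =>
      rw [aList_zero] at h1
      exact hW (List.append_eq_nil_iff.mp h1.symm).1
    | n + 1 =>
      have hWlen : 1 ≤ (FreeMonoid.toList w).length := List.length_pos_iff.mpr hW
      have hslen := pow_toList_length w j
      have halen := aList_len x₁ x₂ (n + 1)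
      have halen2 : (FreeMonoid.toList (aWord x₁ x₂ (n + 1))).length
          = (FreeMonoid.toList w).length + (FreeMonoid.toList (w ^ j)).length := by
        rw [h1, List.length_append]
      have hWle : (FreeMonoid.toList w).length ≤ j * (FreeMonoid.toList w).length :=
        Nat.le_mul_of_pos_left _ (by omega)
      have hsge : n + 1 ≤ (FreeMonoid.toList (w ^ j)).length := by omega
      have hb := aList_succ x₁ x₂ n
      have hSsuf : FreeMonoid.toList (w ^ j) <:+ FreeMonoid.toList (aWord x₁ x₂ (n + 1)) :=
        ⟨_, h1.symm⟩
      have hrep : List.replicate (n + 1) x₂ <:+ FreeMonoid.toList (aWord x₁ x₂ (n + 1)) :=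
        ⟨FreeMonoid.toList (aWord x₁ x₂ n) ++ [x₁], by rw [hb]; simp⟩
      have hrs : List.replicate (n + 1) x₂ <:+ FreeMonoid.toList (w ^ j) := by
        rcases List.suffix_or_suffix_of_suffix hrep hSsuf with hf | hf
        · exact hf
        · have hfl := hf.length_le
          simp only [List.length_replicate] at hfl
          have : FreeMonoid.toList (w ^ j) = List.replicate (n + 1) x₂ :=
            hf.eq_of_length (by simp; omega)
          rw [this]
      obtain ⟨s', hs'⟩ := hrs
      have h3 : FreeMonoid.toList (aWord x₁ x₂ (n + 1))
          = s' ++ (List.replicate (n + 1) x₂ ++ FreeMonoid.toList w) := by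
        rw [h2, ← hs']
        simp [List.append_assoc]
      exact hW (key hx (n + 1) s' (FreeMonoid.toList w) h3)
  · rintro ⟨w₁, w₂, hw1, hw2, hs⟩
    have hW1 : FreeMonoid.toList w₁ ≠ [] := fun hnil => hw1 hnil
    have hW2 : FreeMonoid.toList w₂ ≠ [] := fun hnil => hw2 hnil
    have ha : FreeMonoid.toList (aWord x₁ x₂ m)
        = FreeMonoid.toList w₁ ++ (FreeMonoid.toList w₂ ++ FreeMonoid.toList w₁) := by
      rw [hs, FreeMonoid.toList_mul, FreeMonoid.toList_mul, List.append_assoc]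
    match m with
    | 0 =>
      rw [aList_zero] at ha
      exact hW1 (List.append_eq_nil_iff.mp ha.symm).1
    | n + 1 =>
      have hb := aList_succ x₁ x₂ n
      have hW1suf : FreeMonoid.toList w₁ <:+ FreeMonoid.toList (aWord x₁ x₂ (n + 1)) :=
        ⟨FreeMonoid.toList w₁ ++ FreeMonoid.toList w₂, by rw [ha]; simp⟩
      have hS2 : (x₁ :: List.replicate (n + 1) x₂) <:+ FreeMonoid.toList (aWord x₁ x₂ (n + 1)) :=
        ⟨_, hb.symm⟩
      -- if x₁ :: rep (n+1) is a suffix of W₁, contradiction via key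
      have hlong : ¬ ((x₁ :: List.replicate (n + 1) x₂) <:+ FreeMonoid.toList w₁) := by
        rintro ⟨t, ht⟩
        have h3 : FreeMonoid.toList (aWord x₁ x₂ (n + 1))
            = (t ++ [x₁]) ++ (List.replicate (n + 1) x₂
                ++ (FreeMonoid.toList w₂ ++ FreeMonoid.toList w₁)) := by
          rw [ha, ← ht]
          simp [List.append_assoc]
        have := key hx (n + 1) (t ++ [x₁])
          (FreeMonoid.toList w₂ ++ FreeMonoid.toList w₁) h3
        exact hW2 (List.append_eq_nil_iff.mp this).1
      -- if W₁ consists only of x₂'s, contradiction via the head of a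
      have hallx2 : ¬ (∀ b ∈ FreeMonoid.toList w₁, b = x₂) := by
        intro hall
        obtain ⟨r, hr⟩ := aList_head x₁ x₂ n
        match hW₁ : FreeMonoid.toList w₁ with
        | [] => exact hW1 hW₁
        | b :: t =>
          have hb2 : b = x₂ := hall b (by rw [hW₁]; exact List.mem_cons_self)
          rw [hW₁] at ha
          rw [hr, List.cons_append] at ha
          injection ha with hhead _
          exact hx (hhead.trans hb2)
      rcases List.suffix_or_suffix_of_suffix hS2 hW1suf with hf | hf
      · exact hlong hf
      · rcases List.suffix_or_suffix_of_suffix hf (List.suffix_cons x₁ _) with hg | hg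
        · exact hallx2 fun b hb => List.eq_of_mem_replicate (hg.sublist.subset hb)
        · have hgle := hg.length_le
          have hfle := hf.length_le
          simp only [List.length_cons, List.length_replicate] at hgle hfle
          by_cases hlen : (FreeMonoid.toList w₁).length = n + 2
          · have : FreeMonoid.toList w₁ = x₁ :: List.replicate (n + 1) x₂ :=
              hf.eq_of_length (by simp; omega)
            exact hlong (this ▸ List.suffix_refl _)
          · have heq : List.replicate (n + 1) x₂ = FreeMonoid.toList w₁ :=
              hg.eq_of_length (by simp; omega)
            exact hallx2 fun b hb => List.eq_of_mem_replicate (heq ▸ hb)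
end
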